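/- For θ ∈ (0, π) with cos θ not equal to any Chebyshev node x_{m,N}, the Chebyshev-Lagrange basis polynomial satisfies the closed form ℓ_{n,N}(cos θ) = (1/(2N)) [ sin(N(θ - θ_{n,N}))/tan((θ - θ_{n,N})/2) + sin(N(θ + θ_{n,N}))/tan((θ + θ_{n,N})/2) ], where θ_{n,N} = (2n-1)π/(2N). -/

import Mathlib

open Real Finset

noncomputable def chebNode (N n : ℕ) : ℝ := Real.cos ((2 * (n : ℝ) - 1) * Real.pi / (2 * N))

noncomputable def chebLagrange (N n : ℕ) (x : ℝ) : ℝ :=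
  ∏ m ∈ (Finset.Icc 1 N).erase n, (x - chebNode N m) / (chebNode N n - chebNode N m)

lemma prod_sub_pow_root (n : ℕ) (hn : 0 < n) {ζ : ℂ} (hζ : IsPrimitiveRoot ζ n) (z : ℂ) :
    ∏ k ∈ Finset.range n, (z - ζ ^ k) = z ^ n - 1 := by
  classical
  open Polynomial in
  have hr : (X ^ n - C (1:ℂ)).roots = (Multiset.range n).map (fun k => ζ ^ k * 1) :=
    hζ.nthRoots_eq (one_pow n)
  have hm : (X ^ n - C (1:ℂ)).Monic := Polynomial.monic_X_pow_sub_C 1 hn.ne'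
  have hcard : ((X ^ n - C (1:ℂ)).roots).card = (X ^ n - C (1:ℂ)).natDegree := by
    rw [Polynomial.natDegree_X_pow_sub_C, hr, Multiset.card_map, Multiset.card_range]
  have h := Polynomial.prod_multiset_X_sub_C_of_monic_of_roots_card_eq hm hcard
  rw [hr] at h
  have := congrArg (Polynomial.eval z) h
  simp only [Multiset.map_map, Polynomial.eval_multiset_prod, Function.comp,
    Polynomial.eval_sub, Polynomial.eval_X, Polynomial.eval_C, Polynomial.eval_pow,
    mul_one] at this
  rw [← this, Finset.prod_eq_multiset_prod, Finset.range_val]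

open Complex in
lemma prod_two_sin_complex (n : ℕ) (hn : 0 < n) (x : ℂ) :
    ∏ k ∈ Finset.range n, (2 * Complex.sin (x + k * (Real.pi : ℂ) / n)) =
      2 * Complex.sin (n * x) := by
  set piC : ℂ := (Real.pi : ℂ) with hpiC
  have hn' : (n : ℂ) ≠ 0 := Nat.cast_ne_zero.mpr hn.ne'
  set ζ : ℂ := Complex.exp (2 * piC * I / n) with hζdef
  have hζ : IsPrimitiveRoot ζ n := Complex.isPrimitiveRoot_exp n hn.ne'
  have hζne : ζ ≠ 0 := Complex.exp_ne_zero _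
  have hS : (∑ k ∈ Finset.range n, (k : ℂ)) * 2 = n * (n - 1) := by
    have h2 := congrArg (Nat.cast : ℕ → ℂ) (Finset.sum_range_id_mul_two n)
    push_cast [Nat.cast_sub hn] at h2
    exact h2
  have hfac : ∀ k : ℕ, 2 * Complex.sin (x + k * piC / n) =
      (-I * Complex.exp (-(x + k * piC / n) * I)) * (Complex.exp (2 * I * x) * ζ ^ k - 1) := by
    intro k
    have e1 : Complex.exp (-(x + k * piC / n) * I) * (Complex.exp (2 * I * x) * ζ ^ k)
        = Complex.exp ((x + k * piC / n) * I) := by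
      rw [hζdef, ← Complex.exp_nat_mul, ← Complex.exp_add, ← Complex.exp_add]
      congr 1
      ring
    rw [Complex.sin]
    linear_combination I * e1
  rw [Finset.prod_congr rfl (fun k _ => hfac k), Finset.prod_mul_distrib]
  have hstep : ∀ k : ℕ, Complex.exp (2 * I * x) * ζ ^ k - 1 =
      ζ ^ k * (Complex.exp (2 * I * x) - (ζ⁻¹) ^ k) := by
    intro k
    have h1 : ζ ^ k * (ζ⁻¹) ^ k = 1 := by
      rw [← mul_pow, mul_inv_cancel₀ hζne, one_pow]
    rw [mul_sub, h1]; ring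
  rw [Finset.prod_congr rfl (fun k _ => hstep k), Finset.prod_mul_distrib,
    Finset.prod_mul_distrib, prod_sub_pow_root n hn hζ.inv]
  have hz : ∏ k ∈ Finset.range n, ζ ^ k = Complex.exp (I * piC * (n - 1)) := by
    rw [hζdef]
    simp only [← Complex.exp_nat_mul]
    rw [← Complex.exp_sum]
    congr 1
    rw [← Finset.sum_mul]
    field_simp
    linear_combination piC * hS
  have hA : (∏ _k ∈ Finset.range n, (-I)) * ∏ k ∈ Finset.range n,
      Complex.exp (-(x + k * piC / n) * I) =
      (-I) ^ n * Complex.exp (-(I * (n * x)) - I * piC * (n-1) / 2) := by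
    rw [Finset.prod_const, Finset.card_range, ← Complex.exp_sum]
    congr 2
    calc ∑ k ∈ Finset.range n, (-(x + k * piC / n) * I)
        = ∑ k ∈ Finset.range n, (-(I*x) + (k:ℂ) * (-(I*piC/n))) :=
          Finset.sum_congr rfl (fun k _ => by ring)
      _ = n • (-(I*x)) + (∑ k ∈ Finset.range n, (k:ℂ)) * (-(I*piC/n)) := by
          rw [Finset.sum_add_distrib, Finset.sum_const, Finset.card_range, ← Finset.sum_mul]
      _ = -(I * (n * x)) - I * piC * (n-1) / 2 := by
          rw [nsmul_eq_mul]
          field_simp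
          linear_combination (-piC) * hS
  rw [← mul_assoc, hA, hz]
  have hIn : (-I) ^ n * Complex.exp (-(I * (n * x)) - I * piC * (n-1) / 2) *
      Complex.exp (I * piC * (n - 1)) =
      -I * Complex.exp (-(I * (n * x))) := by
    have hmi : -I = Complex.exp (-(piC/2) * I) := by
      rw [Complex.exp_mul_I]
      simp [hpiC]
    rw [hmi, ← Complex.exp_nat_mul, ← Complex.exp_add, ← Complex.exp_add, ← Complex.exp_add]
    congr 1
    ring
  have hWE : Complex.exp (2*I*x) ^ n * Complex.exp (-(I * (n * x))) =
      Complex.exp ((n * x : ℂ) * I) := by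
    rw [← Complex.exp_nat_mul, ← Complex.exp_add]; congr 1; ring
  have hE : Complex.exp (-(I * (n * x))) = Complex.exp (-(n * x : ℂ) * I) := by
    congr 1; ring
  rw [Complex.sin]
  linear_combination (Complex.exp (2*I*x) ^ n - 1) * hIn + (-I) * hWE + I * hE

lemma prod_two_sin (n : ℕ) (hn : 0 < n) (x : ℝ) :
    ∏ k ∈ Finset.range n, (2 * Real.sin (x + k * π / n)) = 2 * Real.sin (n * x) := by
  rw [← Complex.ofReal_inj]
  push_cast [Complex.ofReal_sin]
  exact prod_two_sin_complex n hn x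

lemma prod_cos_sub (N : ℕ) (hN : 1 ≤ N) (θ : ℝ) :
    ∏ m ∈ Finset.Icc 1 N, (Real.cos θ - chebNode N m) = Real.cos (N * θ) / 2 ^ (N - 1) := by
  have hNR : (N:ℝ) ≠ 0 := Nat.cast_ne_zero.mpr (by omega)
  set y : ℝ := θ/2 - (2*(N:ℝ)-1)*π/(4*N) with hy
  have hIcc : ∏ m ∈ Finset.Icc 1 N, (Real.cos θ - chebNode N m)
      = ∏ i ∈ Finset.range N, (Real.cos θ - chebNode N (1+i)) := by
    rw [← Finset.Ico_add_one_right_eq_Icc, Finset.prod_Ico_eq_prod_range]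
    simp
  have key : ∀ i ∈ Finset.range N, Real.cos θ - chebNode N (1+i)
      = (-(1:ℝ)/2) * ((2*Real.sin (y + ((N-1-i : ℕ):ℝ) * π / ((2*N : ℕ):ℝ))) *
        (2*Real.sin (y + ((N+i : ℕ):ℝ) * π / ((2*N : ℕ):ℝ)))) := by
    intro i hi
    rw [Finset.mem_range] at hi
    have c1 : ((N-1-i : ℕ):ℝ) = (N:ℝ) - 1 - i := by
      have h1 : 1 + i ≤ N := by omega
      push_cast [Nat.cast_sub (show i ≤ N-1 by omega), Nat.cast_sub hN]
      ring
    have c2 : ((N+i : ℕ):ℝ) = (N:ℝ) + i := by push_cast; ring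
    rw [chebNode, Real.cos_sub_cos, c1, c2]
    have A1 : (θ + (2 * ((1+i : ℕ):ℝ) - 1) * π / (2 * N)) / 2
        = y + ((N:ℝ) + i) * π / ((2*N : ℕ):ℝ) := by
      rw [hy]; push_cast; field_simp; ring
    have A2 : (θ - (2 * ((1+i : ℕ):ℝ) - 1) * π / (2 * N)) / 2
        = y + ((N:ℝ) - 1 - i) * π / ((2*N : ℕ):ℝ) := by
      rw [hy]; push_cast; field_simp; ring
    rw [A1, A2]
    ring
  rw [hIcc, Finset.prod_congr rfl key, Finset.prod_mul_distrib, Finset.prod_const,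
    Finset.card_range]
  have hrefl : ∏ i ∈ Finset.range N, (2*Real.sin (y + ((N-1-i : ℕ):ℝ) * π / ((2*N : ℕ):ℝ)))
      = ∏ j ∈ Finset.range N, (2*Real.sin (y + (j:ℝ) * π / ((2*N : ℕ):ℝ))) :=
    Finset.prod_range_reflect (fun j => 2*Real.sin (y + (j:ℝ) * π / ((2*N : ℕ):ℝ))) N
  rw [Finset.prod_mul_distrib, hrefl, ← Finset.prod_range_add, (two_mul N).symm,
    prod_two_sin (2*N) (by omega) y]
  have hyy : ((2*N : ℕ):ℝ) * y = (↑N*θ - ↑N*π) + π/2 := by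
    rw [hy]; push_cast; field_simp; ring
  rw [hyy, Real.sin_add_pi_div_two, show (↑N*θ - ↑N*π : ℝ) = -(↑N*π - ↑N*θ) by ring,
    Real.cos_neg, Real.cos_nat_mul_pi_sub]
  have hm1 : ((-1:ℝ))^N * (-1)^N = 1 := by rw [← mul_pow]; norm_num
  have h2N : (2:ℝ)^N = 2 * 2^(N-1) := by
    conv_lhs => rw [show N = (N-1)+1 by omega]
    rw [pow_succ]; ring
  have h2ne : (2:ℝ)^(N-1) ≠ 0 := by positivity
  rw [div_pow, h2N]
  field_simp
  linear_combination (Real.cos (↑N*θ)) * hm1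

lemma theta_mem (N : ℕ) (hN : 1 ≤ N) (n : ℕ) (hn : n ∈ Finset.Icc 1 N) :
    (2 * (n : ℝ) - 1) * π / (2 * N) ∈ Set.Ioo 0 π := by
  rw [Finset.mem_Icc] at hn
  have h1 : (1:ℝ) ≤ (n:ℝ) := by exact_mod_cast hn.1
  have h2 : (n:ℝ) ≤ N := by exact_mod_cast hn.2
  have hNpos : (0:ℝ) < N := by positivity
  constructor
  · apply div_pos (by nlinarith [Real.pi_pos]) (by positivity)
  · rw [div_lt_iff₀ (by positivity)]
    nlinarith [Real.pi_pos]

lemma denom_eq (N : ℕ) (hN : 1 ≤ N) (n : ℕ) (hn : n ∈ Finset.Icc 1 N) :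
    ∏ m ∈ (Finset.Icc 1 N).erase n, (chebNode N n - chebNode N m)
      = (N : ℝ) * Real.sin ((N:ℝ) * ((2*(n:ℝ)-1)*π/(2*(N:ℝ))))
        / (2^(N-1) * Real.sin ((2*(n:ℝ)-1)*π/(2*(N:ℝ)))) := by
  set θn : ℝ := (2*(n:ℝ)-1)*π/(2*(N:ℝ)) with hθn
  have hmem := theta_mem N hN n hn
  have hsin : Real.sin θn ≠ 0 :=
    ne_of_gt (Real.sin_pos_of_pos_of_lt_pi hmem.1 hmem.2)
  have hnode : chebNode N n = Real.cos θn := rfl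
  have h1 : HasDerivAt (fun θ => ∏ m ∈ Finset.Icc 1 N, (Real.cos θ - chebNode N m))
      (∑ m ∈ Finset.Icc 1 N,
        (∏ j ∈ (Finset.Icc 1 N).erase m, (Real.cos θn - chebNode N j)) • (-Real.sin θn)) θn :=
    HasDerivAt.fun_finsetProd (fun i _ => (Real.hasDerivAt_cos θn).sub_const (chebNode N i))
  have heq : (fun θ => ∏ m ∈ Finset.Icc 1 N, (Real.cos θ - chebNode N m))
      = fun θ => Real.cos ((N:ℝ) * θ) / 2 ^ (N - 1) := funext (prod_cos_sub N hN)
  rw [heq] at h1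
  have h2 : HasDerivAt (fun θ : ℝ => Real.cos ((N:ℝ) * θ) / 2 ^ (N - 1))
      ((-Real.sin ((N:ℝ) * θn) * (N:ℝ)) / 2 ^ (N - 1)) θn := by
    have hlin : HasDerivAt (fun θ : ℝ => (N:ℝ) * θ) (N:ℝ) θn := by
      simpa using (hasDerivAt_id θn).const_mul (N:ℝ)
    exact ((Real.hasDerivAt_cos ((N:ℝ) * θn)).comp θn hlin).div_const _
  have huniq := h1.unique h2
  have hsum : ∑ m ∈ Finset.Icc 1 N,
      (∏ j ∈ (Finset.Icc 1 N).erase m, (Real.cos θn - chebNode N j)) • (-Real.sin θn)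
      = (∏ j ∈ (Finset.Icc 1 N).erase n, (Real.cos θn - chebNode N j)) * (-Real.sin θn) := by
    rw [Finset.sum_eq_single n]
    · rw [smul_eq_mul]
    · intro m hm hmn
      have hnn : n ∈ (Finset.Icc 1 N).erase m := Finset.mem_erase.mpr ⟨hmn.symm, hn⟩
      rw [Finset.prod_eq_zero hnn (by rw [hnode]; ring), zero_smul]
    · intro h; exact absurd hn h
  rw [hsum] at huniq
  rw [hnode]
  have h2pow : (2:ℝ)^(N-1) ≠ 0 := by positivity
  field_simp at huniq
  rw [eq_div_iff (mul_ne_zero h2pow hsin)]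
  linear_combination -huniq

theorem chebLagrange_closed_form (N : ℕ) (hN : 1 ≤ N) (n : ℕ) (hn : n ∈ Finset.Icc 1 N)
    (θ : ℝ) (hθ : θ ∈ Set.Ioo 0 Real.pi)
    (hx : ∀ m ∈ Finset.Icc 1 N, Real.cos θ ≠ chebNode N m) :
    chebLagrange N n (Real.cos θ) =
      (1 / (2 * N)) *
        (Real.sin (N * (θ - (2 * (n : ℝ) - 1) * Real.pi / (2 * N))) /
            Real.tan ((θ - (2 * (n : ℝ) - 1) * Real.pi / (2 * N)) / 2) +
          Real.sin (N * (θ + (2 * (n : ℝ) - 1) * Real.pi / (2 * N))) /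
            Real.tan ((θ + (2 * (n : ℝ) - 1) * Real.pi / (2 * N)) / 2)) := by
  have hNR : (N:ℝ) ≠ 0 := Nat.cast_ne_zero.mpr (by omega)
  set θn : ℝ := (2*(n:ℝ)-1)*π/(2*(N:ℝ)) with hθn
  have hmem := theta_mem N hN n hn
  have hsinθn : Real.sin θn ≠ 0 :=
    ne_of_gt (Real.sin_pos_of_pos_of_lt_pi hmem.1 hmem.2)
  have hnode : chebNode N n = Real.cos θn := rfl
  have hxn : Real.cos θ ≠ Real.cos θn := hnode ▸ hx n hn
  have hθne : θ ≠ θn := fun h => hxn (by rw [h])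
  -- numerator and denominator
  rw [chebLagrange, Finset.prod_div_distrib, denom_eq N hN n hn]
  have hnum : ∏ m ∈ (Finset.Icc 1 N).erase n, (Real.cos θ - chebNode N m)
      = Real.cos (N*θ) / 2^(N-1) / (Real.cos θ - Real.cos θn) := by
    have h := prod_cos_sub N hN θ
    rw [← Finset.mul_prod_erase _ _ hn, hnode] at h
    rw [eq_div_iff (sub_ne_zero.mpr hxn)]
    linear_combination h
  rw [hnum, ← hθn]
  -- trig facts
  have hcosN : Real.cos ((N:ℝ)*θn) = 0 := by
    have harg : (N:ℝ)*θn = (2*((n:ℤ)-1:ℤ)+1)*(π/2) := by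
      rw [hθn]; push_cast; field_simp; ring
    rw [harg]
    exact Real.cos_eq_zero_iff.mpr ⟨(n:ℤ)-1, by push_cast; ring⟩
  have hsin2 : Real.sin ((N:ℝ)*θn)^2 = 1 := by
    have h := Real.sin_sq_add_cos_sq ((N:ℝ)*θn)
    rw [hcosN] at h
    nlinarith [h]
  have hsN : Real.sin ((N:ℝ)*θn) ≠ 0 := by
    intro h; rw [h] at hsin2; norm_num at hsin2
  have hsa : Real.sin ((θ - θn)/2) ≠ 0 := by
    have hlt1 : -π < (θ - θn)/2 := by
      obtain ⟨h1, h2⟩ := hθ; obtain ⟨h3, h4⟩ := hmem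
      rw [← hθn] at h3 h4
      linarith
    have hlt2 : (θ - θn)/2 < π := by
      obtain ⟨h1, h2⟩ := hθ; obtain ⟨h3, h4⟩ := hmem
      rw [← hθn] at h3 h4
      linarith
    rw [ne_eq, Real.sin_eq_zero_iff_of_lt_of_lt hlt1 hlt2]
    intro h
    exact hθne (by linarith [h])
  have hsb : Real.sin ((θ + θn)/2) ≠ 0 := by
    apply ne_of_gt
    apply Real.sin_pos_of_pos_of_lt_pi
    · obtain ⟨h1, _⟩ := hθ; obtain ⟨h3, _⟩ := hmem; rw [← hθn] at h3; linarith
    · obtain ⟨_, h2⟩ := hθ; obtain ⟨_, h4⟩ := hmem; rw [← hθn] at h4; linarith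
  have hcc : Real.cos θ - Real.cos θn =
      -2 * Real.sin ((θ+θn)/2) * Real.sin ((θ-θn)/2) := Real.cos_sub_cos θ θn
  have hss : Real.sin ((θ-θn)/2) * Real.cos ((θ+θn)/2)
      - Real.cos ((θ-θn)/2) * Real.sin ((θ+θn)/2) = -Real.sin θn := by
    rw [← Real.sin_sub, show (θ-θn)/2 - (θ+θn)/2 = -θn by ring, Real.sin_neg]
  rw [Real.tan_eq_sin_div_cos, Real.tan_eq_sin_div_cos,
    show (N:ℝ) * (θ - θn) = (N:ℝ)*θ - (N:ℝ)*θn by ring,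
    show (N:ℝ) * (θ + θn) = (N:ℝ)*θ + (N:ℝ)*θn by ring,
    Real.sin_sub, Real.sin_add, hcosN]
  have hxsub : Real.cos θ - Real.cos θn ≠ 0 := sub_ne_zero.mpr hxn
  have h2pow : (2:ℝ)^(N-1) ≠ 0 := by positivity
  field_simp
  linear_combination
    (-(Real.cos ((N:ℝ)*θ) * Real.sin ((N:ℝ)*θn)^2 * (Real.cos θ - Real.cos θn))) * hss
    + (Real.cos ((N:ℝ)*θ) * Real.sin ((N:ℝ)*θn)^2 * Real.sin θn) * hcc
    + (-(2 * Real.cos ((N:ℝ)*θ) * Real.sin θn *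
        Real.sin ((θ-θn)/2) * Real.sin ((θ+θn)/2))) * hsin2
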